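/- For all integers n ≥ 2, all real ε' ≥ 0 with ε' ≤ 1/n, and all i with 1 ≤ i ≤ n, the product (1/i − ε') · ∏_{j=i}^{n-1} (j/(j+1) − ε') is at least 1/n − n·ε', provided each factor is nonnegative. -/

import Mathlib

lemma honest_aux (i : ℕ) (hi : 1 ≤ i) (ε' : ℝ) (hε0 : 0 ≤ ε')
    (hfac0 : 0 ≤ 1 / (i : ℝ) - ε') :
    ∀ n, i ≤ n → ε' ≤ 1 / (n : ℝ) →
      (∀ j ∈ Finset.Ico i n, 0 ≤ (j : ℝ) / ((j : ℝ) + 1) - ε') →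
      (1 / (i : ℝ) - ε') * ∏ j ∈ Finset.Ico i n, ((j : ℝ) / ((j : ℝ) + 1) - ε')
        ≥ 1 / (n : ℝ) - (n : ℝ) * ε' := by
  intro n hin
  induction n, hin using Nat.le_induction with
  | base =>
    intro _ _
    simp only [Finset.Ico_self, Finset.prod_empty, mul_one]
    have hi' : (1 : ℝ) ≤ (i : ℝ) := by exact_mod_cast hi
    nlinarith
  | succ n hn ih =>
    intro hε1 hfac
    have hn1 : (1 : ℝ) ≤ (n : ℝ) := by exact_mod_cast le_trans hi hn
    have hx : (0 : ℝ) < (n : ℝ) := by linarith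
    have hx1 : (0 : ℝ) < (n : ℝ) + 1 := by linarith
    have hε1' : ε' ≤ 1 / (n : ℝ) := by
      refine le_trans hε1 ?_
      apply div_le_div_of_nonneg_left (by norm_num) hx (by push_cast; linarith)
    have hcast : ((n + 1 : ℕ) : ℝ) = (n : ℝ) + 1 := by push_cast; ring
    rw [hcast] at hε1
    have hfac' : ∀ j ∈ Finset.Ico i n, 0 ≤ (j : ℝ) / ((j : ℝ) + 1) - ε' := by
      intro j hj
      exact hfac j (Finset.mem_Ico.mpr ⟨(Finset.mem_Ico.mp hj).1,
        Nat.lt_succ_of_lt (Finset.mem_Ico.mp hj).2⟩)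
    have IH := ih hε1' hfac'
    have ha : 0 ≤ (n : ℝ) / ((n : ℝ) + 1) - ε' :=
      hfac n (Finset.mem_Ico.mpr ⟨hn, Nat.lt_succ_self n⟩)
    rw [Finset.prod_Ico_succ_top hn, ← mul_assoc]
    have step1 : (1 / (i : ℝ) - ε') * (∏ j ∈ Finset.Ico i n, ((j : ℝ) / ((j : ℝ) + 1) - ε')) *
        ((n : ℝ) / ((n : ℝ) + 1) - ε')
        ≥ (1 / (n : ℝ) - (n : ℝ) * ε') * ((n : ℝ) / ((n : ℝ) + 1) - ε') :=
      mul_le_mul_of_nonneg_right IH ha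
    refine le_trans ?_ step1
    rw [hcast]
    have h1 : ε' * ((n : ℝ) + 1) ≤ 1 := by
      rw [div_eq_inv_mul, mul_one] at hε1
      calc ε' * ((n : ℝ) + 1) ≤ ((n:ℝ)+1)⁻¹ * ((n : ℝ) + 1) :=
            mul_le_mul_of_nonneg_right hε1 (by linarith)
        _ = 1 := by field_simp
    have e1 : 1/(n:ℝ) - n*ε' = (1 - n^2*ε')/n := by field_simp
    have e2 : (n:ℝ)/((n:ℝ)+1) - ε' = ((n:ℝ) - ((n:ℝ)+1)*ε')/((n:ℝ)+1) := by field_simp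
    have e3 : 1/((n:ℝ)+1) - ((n:ℝ)+1)*ε' = (1 - ((n:ℝ)+1)^2*ε')/((n:ℝ)+1) := by
      field_simp
    rw [e1, e2, e3, div_mul_div_comm, div_le_div_iff₀ hx1 (by positivity)]
    nlinarith [mul_nonneg (mul_nonneg hε0 hε0) (by positivity : (0:ℝ) ≤ (n:ℝ)^2*((n:ℝ)+1)),
      mul_nonneg hε0 (by nlinarith : (0:ℝ) ≤ 2*(n:ℝ)^2 - 1)]

theorem honest_player_bound (n : ℕ) (hn : 2 ≤ n) (ε' : ℝ) (hε0 : 0 ≤ ε') (hε1 : ε' ≤ 1 / (n : ℝ))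
    (i : ℕ) (hi : 1 ≤ i) (hin : i ≤ n)
    (hfac0 : 0 ≤ 1 / (i : ℝ) - ε')
    (hfac : ∀ j ∈ Finset.Ico i n, 0 ≤ (j : ℝ) / ((j : ℝ) + 1) - ε') :
    (1 / (i : ℝ) - ε') * ∏ j ∈ Finset.Ico i n, ((j : ℝ) / ((j : ℝ) + 1) - ε')
      ≥ 1 / (n : ℝ) - (n : ℝ) * ε' := by
  exact honest_aux i hi ε' hε0 hfac0 n hin hε1 hfac
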